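/- For any finite connected multigraph G with vertex set V and any non-trivial partition Π of V, the partition weights satisfy ∑_{T spanning tree of G} w^Π(G,T) = 1, where w^Π(G,T) = ∑_{τ admissible ordering of T} ∏_{p=0}^{|V|−2} 1/k_p(T_τ), and k_p(T_τ) is the number of trans-block edges of the p-th contracted graph for the p-th contracted partition in the sequence generated by T_τ. -/

import Mathlib

open scoped Classical
open MeasureTheory

/-- A multigraph on vertex type `V` with edge type `E`: each edge has an
unordered pair of endpoints (self-loops and multiple edges allowed). -/
structure Multigraph (V E : Type) where
  ends : E → Sym2 V

namespace Multigraph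

variable {V E : Type}

/-- Two vertices are connected using only edges in the subset `S`. -/
def Connects (G : Multigraph V E) (S : Finset E) (v w : V) : Prop :=
  Relation.ReflTransGen (fun a b => ∃ e ∈ S, G.ends e = s(a, b)) v w

/-- The multigraph is connected. -/
def IsConnected (G : Multigraph V E) [Fintype E] : Prop :=
  ∀ v w : V, G.Connects Finset.univ v w

/-- A spanning tree: a spanning connected edge subset with `|V| - 1` edges. -/
def IsSpanningTree (G : Multigraph V E) [Fintype V] [Fintype E] (T : Finset E) : Prop :=
  (∀ v w : V, G.Connects T v w) ∧ T.card = Fintype.card V - 1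

/-- Kruskal's greedy algorithm: process the edges in increasing order of the
Hepp sector `σ`, inserting an edge iff it does not create a cycle (i.e. iff
its endpoints are not yet connected by the edges selected so far). -/
noncomputable def kruskal (G : Multigraph V E) [Fintype E]
    (σ : E ≃ Fin (Fintype.card E)) : Finset E :=
  ((List.finRange (Fintype.card E)).map σ.symm).foldl
    (fun S e => if ∀ a b, G.ends e = s(a, b) → ¬ G.Connects S a b then insert e S else S) ∅

/-- The symmetric weight `w_s(G,T)`: the fraction of Hepp sectors for which
`T` is the Kruskal leading tree. -/
noncomputable def ws (G : Multigraph V E) [Fintype V] [Fintype E] (T : Finset E) : ℚ :=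
  (Fintype.card {σ : E ≃ Fin (Fintype.card E) // G.kruskal σ = T} : ℚ) /
    (Nat.factorial (Fintype.card E) : ℚ)

/-- Updating the merge relation (which vertices have been identified) after
contracting the edge `e`: the equivalence closure of `M` together with the
pair of endpoints of `e`. -/
def mergeStep (G : Multigraph V E) (M : V → V → Prop) (e : E) : V → V → Prop :=
  Relation.EqvGen (fun a b => M a b ∨ G.ends e = s(a, b))

/-- Updating the block (partition) relation after contracting the trans-block
edge `e`: the new merged vertex forms a singleton block, the endpoints of `e`
are removed from their old blocks, and all other blocks are unchanged. -/
def blockStep (G : Multigraph V E) (M B : V → V → Prop) (e : E) : V → V → Prop :=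
  fun x y => ∀ a b, G.ends e = s(a, b) →
    ((G.mergeStep M e x a ∧ G.mergeStep M e y a) ∨
      (B x y ∧ ¬ G.mergeStep M e x a ∧ ¬ G.mergeStep M e y a))

/-- One contraction step on the pair (merge relation, block relation). -/
def stepPair (G : Multigraph V E) (s : (V → V → Prop) × (V → V → Prop)) (e : E) :
    (V → V → Prop) × (V → V → Prop) :=
  (G.mergeStep s.1 e, G.blockStep s.1 s.2 e)

/-- The state (merge relation, block relation) after contracting, in order,
the edges of the list `L`, starting from the discrete merge relation `Eq` and
initial block (partition) relation `B0`. -/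
def state (G : Multigraph V E) (B0 : V → V → Prop) (L : List E) :
    (V → V → Prop) × (V → V → Prop) :=
  L.foldl G.stepPair (Eq, B0)

/-- An edge is trans-block for the block relation `B` if its endpoints lie in
distinct blocks (in particular it is not a self-loop, even after merging). -/
def TransBlock (G : Multigraph V E) (B : V → V → Prop) (e : E) : Prop :=
  ∀ a b, G.ends e = s(a, b) → ¬ B a b

/-- The ordered list of edges `L` is a trans-block ordered forest for the
initial partition `B0`: each successive edge is trans-block for the
successively contracted partition. -/
def IsTransBlockSeq (G : Multigraph V E) (B0 : V → V → Prop) (L : List E) : Prop :=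
  ∀ p (h : p < L.length), G.TransBlock (G.state B0 (L.take p)).2 (L.get ⟨p, h⟩)

/-- `k_p`: the number of trans-block edges of the `p`-th contracted graph for
the `p`-th contracted partition (already-contracted edges are self-loops of
the contracted graph, hence never trans-block). -/
noncomputable def kcount (G : Multigraph V E) [Fintype E] (B0 : V → V → Prop)
    (L : List E) (p : ℕ) : ℕ :=
  (Finset.univ.filter fun e => G.TransBlock (G.state B0 (L.take p)).2 e).card

/-- First contact index `i(v,v')`: smallest `p` such that `v, v'` lie in
different blocks of `Π_p` (with the convention `i(v,v) = -1, j(v,v) = 0`,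
realized here by taking `i(v,v) = j(v,v) = 0`, which makes the corresponding
products empty, as in the convention `X_{v,v} = 1`). -/
noncomputable def iIdx (G : Multigraph V E) (B0 : V → V → Prop) (L : List E)
    (v v' : V) : ℕ :=
  if v = v' then 0 else sInf {p | ¬ (G.state B0 (L.take p)).2 v v'}

/-- Second contact index `j(v,v')`: smallest `p` such that `v, v'` have been
merged into a single vertex of `G_p`. -/
noncomputable def jIdx (G : Multigraph V E) (B0 : V → V → Prop) (L : List E)
    (v v' : V) : ℕ :=
  sInf {p | (G.state B0 (L.take p)).1 v v'}

/-- Entry of the contact matrix: `X_{v,v'}(u) = ∏_{i(v,v') < k ≤ j(v,v')} u_k`,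
where the variable `u_k` (1 ≤ k ≤ |V|-1) is represented by `w ⟨k-1⟩`. -/
noncomputable def Xent (G : Multigraph V E) (B0 : V → V → Prop) (L : List E)
    (n : ℕ) (w : Fin n → ℝ) (v v' : V) : ℝ :=
  ∏ k : Fin n,
    if G.iIdx B0 L v v' ≤ (k : ℕ) ∧ (k : ℕ) < G.jIdx B0 L v v' then w k else 1

/-- Contact-matrix factor `X_{v(ℓ),v'(ℓ)}(u)` of a (loop) edge `ℓ`. -/
noncomputable def XentE (G : Multigraph V E) (B0 : V → V → Prop) (L : List E)
    (n : ℕ) (w : Fin n → ℝ) (e : E) : ℝ :=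
  ∏ k : Fin n,
    if (∀ a b, G.ends e = s(a, b) →
        (G.iIdx B0 L a b ≤ (k : ℕ) ∧ (k : ℕ) < G.jIdx B0 L a b)) then w k else 1

/-- Tree edge factor `Y_ℓ(u) = ∏_{i(v(ℓ),v'(ℓ)) < k < j(v(ℓ),v'(ℓ))} u_k`. -/
noncomputable def Yent (G : Multigraph V E) (B0 : V → V → Prop) (L : List E)
    (n : ℕ) (w : Fin n → ℝ) (e : E) : ℝ :=
  ∏ k : Fin n,
    if (∀ a b, G.ends e = s(a, b) →
        (G.iIdx B0 L a b ≤ (k : ℕ) ∧ (k : ℕ) + 1 < G.jIdx B0 L a b)) then w k else 1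

/-- The weight `∏_{p=0}^{|V|-2} 1/k_p` of a trans-block ordered tree, and `0`
for a non-admissible ordering. -/
noncomputable def wOrd (G : Multigraph V E) [Fintype V] [Fintype E]
    (B0 : V → V → Prop) (L : List E) : ℚ :=
  if G.IsTransBlockSeq B0 L then
    ∏ p ∈ Finset.range (Fintype.card V - 1), ((G.kcount B0 L p : ℚ))⁻¹
  else 0

/-- The partition tree weight `w^Π(G,T)`: the sum over all admissible
orderings `τ` of `T` of `∏_{p=0}^{|V|-2} 1/k_p(T_τ)`. -/
noncomputable def wPi (G : Multigraph V E) [Fintype V] [Fintype E]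
    (B0 : V → V → Prop) (T : Finset E) : ℚ :=
  ∑ τ : Fin T.card ≃ {e // e ∈ T}, G.wOrd B0 (List.ofFn fun i => ((τ i : E)))

end Multigraph

namespace PWaux

open Relation Finset
set_option linter.unusedSectionVars false

variable {V E : Type} [Fintype V] [Fintype E] (G : Multigraph V E)

/-- state starting from arbitrary pair -/
def st (s : (V → V → Prop) × (V → V → Prop)) (L : List E) :
    (V → V → Prop) × (V → V → Prop) :=
  L.foldl G.stepPair s

lemma st_nil (s) : st G s ([] : List E) = s := rfl

lemma st_cons (s) (e : E) (L : List E) :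
    st G s (e :: L) = st G (G.stepPair s e) L := rfl

lemma st_append (s) (L L' : List E) :
    st G s (L ++ L') = st G (st G s L) L' := List.foldl_append

lemma state_eq (B0 : V → V → Prop) (L : List E) :
    G.state B0 L = st G (Eq, B0) L := rfl

/-- minimality of EqvGen -/
lemma eqvGen_le {r s : V → V → Prop} (hs : Equivalence s)
    (h : ∀ x y, r x y → s x y) : ∀ x y, EqvGen r x y → s x y := by
  intro x y hxy
  induction hxy with
  | rel x y hr => exact h _ _ hr
  | refl x => exact hs.refl x
  | symm x y _ ih => exact hs.symm ih
  | trans x y z _ _ ih1 ih2 => exact hs.trans ih1 ih2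

/-- explicit characterization of mergeStep -/
lemma mergeStep_iff {M : V → V → Prop} (hM : Equivalence M) {e : E} {a b : V}
    (he : G.ends e = s(a, b)) (x y : V) :
    G.mergeStep M e x y ↔ M x y ∨ ((M x a ∨ M x b) ∧ (M y a ∨ M y b)) := by
  constructor
  · intro h
    refine eqvGen_le (r := fun p q => M p q ∨ G.ends e = s(p, q))
        (s := fun x y => M x y ∨ ((M x a ∨ M x b) ∧ (M y a ∨ M y b))) ?_ ?_ x y h
    · constructor
      · intro z; exact Or.inl (hM.refl z)
      · rintro z w (h | ⟨h1, h2⟩)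
        · exact Or.inl (hM.symm h)
        · exact Or.inr ⟨h2, h1⟩
      · rintro z w u (h | ⟨h1, h2⟩) (h' | ⟨h1', h2'⟩)
        · exact Or.inl (hM.trans h h')
        · refine Or.inr ⟨?_, h2'⟩
          rcases h1' with h1' | h1'
          · exact Or.inl (hM.trans h h1')
          · exact Or.inr (hM.trans h h1')
        · refine Or.inr ⟨h1, ?_⟩
          rcases h2 with h2 | h2
          · exact Or.inl (hM.trans (hM.symm h') h2)
          · exact Or.inr (hM.trans (hM.symm h') h2)
        · exact Or.inr ⟨h1, h2'⟩
    · rintro z w (h | h)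
      · exact Or.inl h
      · rw [he] at h
        rw [Sym2.eq_iff] at h
        rcases h with ⟨rfl, rfl⟩ | ⟨rfl, rfl⟩
        · exact Or.inr ⟨Or.inl (hM.refl a), Or.inr (hM.refl b)⟩
        · exact Or.inr ⟨Or.inr (hM.refl b), Or.inl (hM.refl a)⟩
  · rintro (h | ⟨h1, h2⟩)
    · exact EqvGen.rel _ _ (Or.inl h)
    · have hab : G.mergeStep M e a b := EqvGen.rel _ _ (Or.inr he)
      have hxa : G.mergeStep M e x a := by
        rcases h1 with h1 | h1
        · exact EqvGen.rel _ _ (Or.inl h1)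
        · exact EqvGen.trans _ _ _ (EqvGen.rel _ _ (Or.inl h1)) (EqvGen.symm _ _ hab)
      have hya : G.mergeStep M e y a := by
        rcases h2 with h2 | h2
        · exact EqvGen.rel _ _ (Or.inl h2)
        · exact EqvGen.trans _ _ _ (EqvGen.rel _ _ (Or.inl h2)) (EqvGen.symm _ _ hab)
      exact EqvGen.trans _ _ _ hxa (EqvGen.symm _ _ hya)

lemma mergeStep_equiv (M : V → V → Prop) (e : E) :
    Equivalence (G.mergeStep M e) := Relation.EqvGen.is_equivalence _

lemma mergeStep_mono {M : V → V → Prop} (e : E) {x y : V} (h : M x y) :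
    G.mergeStep M e x y := EqvGen.rel _ _ (Or.inl h)

lemma mergeStep_ends {M : V → V → Prop} {e : E} {a b : V}
    (he : G.ends e = s(a, b)) : G.mergeStep M e a b := EqvGen.rel _ _ (Or.inr he)

/-- characterization of blockStep -/
lemma blockStep_iff {M B : V → V → Prop} {e : E} {a b : V}
    (he : G.ends e = s(a, b)) (x y : V) :
    G.blockStep M B e x y ↔
      ((G.mergeStep M e x a ∧ G.mergeStep M e y a) ∨
        (B x y ∧ ¬ G.mergeStep M e x a ∧ ¬ G.mergeStep M e y a)) := by
  have hab : G.mergeStep M e a b := mergeStep_ends G he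
  have key : ∀ z : V, G.mergeStep M e z a ↔ G.mergeStep M e z b := by
    intro z
    constructor
    · intro h; exact (mergeStep_equiv G M e).trans h hab
    · intro h; exact (mergeStep_equiv G M e).trans h ((mergeStep_equiv G M e).symm hab)
  constructor
  · intro h; exact h a b he
  · intro h
    intro a' b' he'
    rw [he] at he'
    rw [Sym2.eq_iff] at he'
    rcases he' with ⟨rfl, rfl⟩ | ⟨rfl, rfl⟩
    · exact h
    · rcases h with ⟨h1, h2⟩ | ⟨h1, h2, h3⟩
      · exact Or.inl ⟨(key x).mp h1, (key y).mp h2⟩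
      · exact Or.inr ⟨h1, fun hc => h2 ((key x).mpr hc), fun hc => h3 ((key y).mpr hc)⟩

end PWaux
namespace PWaux
set_option linter.unusedSectionVars false
variable {V E : Type} [Fintype V] [Fintype E] (G : Multigraph V E)

noncomputable def cls (M : V → V → Prop) : V → Finset V :=
  fun v => Finset.univ.filter (M v)

lemma mem_cls {M : V → V → Prop} {v u : V} : u ∈ cls M v ↔ M v u := by
  simp [cls]

lemma cls_eq_iff {M : V → V → Prop} (hM : Equivalence M) {v w : V} :
    cls M v = cls M w ↔ M v w := by
  constructor
  · intro h
    have : w ∈ cls M w := mem_cls.mpr (hM.refl w)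
    rw [← h] at this
    exact mem_cls.mp this
  · intro h
    ext u
    rw [mem_cls, mem_cls]
    exact ⟨fun h' => hM.trans (hM.symm h) h', fun h' => hM.trans h h'⟩

noncomputable def nclasses (M : V → V → Prop) : ℕ :=
  (Finset.univ.image (cls M)).card

lemma nclasses_merge {M : V → V → Prop} (hM : Equivalence M) {e : E} {a b : V}
    (he : G.ends e = s(a, b)) (hab : ¬ M a b) :
    nclasses (G.mergeStep M e) + 1 = nclasses M := by
  set M' := G.mergeStep M e with hM'
  have hiff : ∀ x y, M' x y ↔ M x y ∨ ((M x a ∨ M x b) ∧ (M y a ∨ M y b)) :=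
    mergeStep_iff G hM he
  have hclsU : ∀ v : V, (M v a ∨ M v b) → cls M' v = cls M a ∪ cls M b := by
    intro v hv
    ext u
    rw [mem_cls, Finset.mem_union, mem_cls, mem_cls, hiff]
    constructor
    · rintro (h | ⟨h1, h2⟩)
      · rcases hv with hv | hv
        · exact Or.inl (hM.trans (hM.symm hv) (hM.symm (hM.symm h)))
        · exact Or.inr (hM.trans (hM.symm hv) h)
      · rcases h2 with h2 | h2
        · exact Or.inl (hM.symm h2)
        · exact Or.inr (hM.symm h2)
    · rintro (h | h)
      · exact Or.inr ⟨hv, Or.inl (hM.symm h)⟩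
      · exact Or.inr ⟨hv, Or.inr (hM.symm h)⟩
  have hclsS : ∀ v : V, ¬ (M v a ∨ M v b) → cls M' v = cls M v := by
    intro v hv
    ext u
    rw [mem_cls, mem_cls, hiff]
    constructor
    · rintro (h | ⟨h1, h2⟩)
      · exact h
      · exact absurd h1 hv
    · exact fun h => Or.inl h
  have haU : cls M' a = cls M a ∪ cls M b := hclsU a (Or.inl (hM.refl a))
  have himg : Finset.univ.image (cls M') =
      insert (cls M a ∪ cls M b)
        (((Finset.univ.image (cls M)).erase (cls M a)).erase (cls M b)) := by
    ext x
    simp only [Finset.mem_image, Finset.mem_insert, Finset.mem_erase, Finset.mem_univ,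
      true_and]
    constructor
    · rintro ⟨v, rfl⟩
      by_cases hv : M v a ∨ M v b
      · exact Or.inl (hclsU v hv)
      · push_neg at hv
        refine Or.inr ⟨?_, ?_, v, (hclsS v (by push_neg; exact hv)).symm ▸ rfl⟩
        · rw [hclsS v (by push_neg; exact hv)]
          intro hc
          exact hv.2 ((cls_eq_iff hM).mp hc)
        · rw [hclsS v (by push_neg; exact hv)]
          intro hc
          exact hv.1 ((cls_eq_iff hM).mp hc)
    · rintro (rfl | ⟨hb, ha, v, rfl⟩)
      · exact ⟨a, haU⟩
      · have hva : ¬ M v a := fun hc => ha ((cls_eq_iff hM).mpr hc)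
        have hvb : ¬ M v b := fun hc => hb ((cls_eq_iff hM).mpr hc)
        exact ⟨v, (hclsS v (by push_neg; exact ⟨hva, hvb⟩)).symm ▸ rfl⟩
  have hAB : cls M a ≠ cls M b := fun hc => hab ((cls_eq_iff hM).mp hc)
  have hAmem : cls M a ∈ Finset.univ.image (cls M) :=
    Finset.mem_image.mpr ⟨a, Finset.mem_univ a, rfl⟩
  have hBmem : cls M b ∈ Finset.univ.image (cls M) :=
    Finset.mem_image.mpr ⟨b, Finset.mem_univ b, rfl⟩
  have hnotmem : (cls M a ∪ cls M b) ∉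
      ((Finset.univ.image (cls M)).erase (cls M a)).erase (cls M b) := by
    intro hc
    have hc' := Finset.mem_of_mem_erase (Finset.mem_of_mem_erase hc)
    obtain ⟨v, _, hv⟩ := Finset.mem_image.mp hc'
    have hva : M v a := by
      have : a ∈ cls M v := by rw [hv]; exact Finset.mem_union_left _ (mem_cls.mpr (hM.refl a))
      exact mem_cls.mp this
    have heq : cls M v = cls M a := (cls_eq_iff hM).mpr hva
    have hu : cls M a = cls M a ∪ cls M b := heq.symm.trans hv
    have hb : b ∈ cls M a := by
      rw [hu]; exact Finset.mem_union_right _ (mem_cls.mpr (hM.refl b))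
    exact hab (mem_cls.mp hb)
  rw [nclasses, nclasses, himg, Finset.card_insert_of_notMem hnotmem,
    Finset.card_erase_of_mem, Finset.card_erase_of_mem hAmem]
  · have h2 : 2 ≤ (Finset.univ.image (cls M)).card := by
      apply Finset.one_lt_card.mpr
      exact ⟨cls M a, hAmem, cls M b, hBmem, hAB⟩
    omega
  · exact Finset.mem_erase.mpr ⟨Ne.symm hAB, hBmem⟩

structure Inv (s : (V → V → Prop) × (V → V → Prop)) (m : ℕ) : Prop where
  m1 : Equivalence s.1
  b1 : Equivalence s.2
  sub : ∀ x y, s.1 x y → s.2 x y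
  conn : ∀ v w : V, Relation.ReflTransGen (fun a b => s.1 a b ∨ ∃ e : E, G.ends e = s(a, b)) v w
  count : nclasses s.1 = m + 1
  nt : 1 ≤ m → ∃ v w : V, ¬ s.2 v w

lemma inv_step {s : (V → V → Prop) × (V → V → Prop)} {m : ℕ} {e : E}
    (h : Inv G s (m + 1)) (he : G.TransBlock s.2 e) :
    Inv G (G.stepPair s e) m := by
  obtain ⟨⟨a, b⟩, hab0⟩ := Quot.exists_rep (G.ends e)
  have hends : G.ends e = s(a, b) := hab0.symm
  have hBab : ¬ s.2 a b := he a b hends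
  have hMab : ¬ s.1 a b := fun hc => hBab (h.sub _ _ hc)
  set M' := G.mergeStep s.1 e with hM'def
  have hM'equiv : Equivalence M' := mergeStep_equiv G s.1 e
  have hB'iff : ∀ x y, G.blockStep s.1 s.2 e x y ↔
      ((M' x a ∧ M' y a) ∨ (s.2 x y ∧ ¬ M' x a ∧ ¬ M' y a)) :=
    blockStep_iff G hends
  have hM'sub : ∀ x y, M' x y → G.blockStep s.1 s.2 e x y := by
    intro x y hxy
    rw [hB'iff]
    by_cases hx : M' x a
    · exact Or.inl ⟨hx, hM'equiv.trans (hM'equiv.symm hxy) hx⟩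
    · have hy : ¬ M' y a := fun hc => hx (hM'equiv.trans hxy hc)
      have hMxy : s.1 x y := by
        rw [hM'def, mergeStep_iff G h.m1 hends] at hxy
        rcases hxy with hxy | ⟨h1, h2⟩
        · exact hxy
        · exfalso
          rcases h1 with h1 | h1
          · exact hx (mergeStep_mono G e h1)
          · exact hx (hM'equiv.trans (mergeStep_mono G e h1)
              (hM'equiv.symm (mergeStep_ends G hends)))
      exact Or.inr ⟨h.sub _ _ hMxy, hx, hy⟩
  have hcount : nclasses M' = m + 1 := by
    have h4 := nclasses_merge G h.m1 hends hMab
    rw [h.count] at h4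
    exact Nat.succ_injective h4
  refine ⟨hM'equiv, ?_, hM'sub, ?_, hcount, ?_⟩
  · show Equivalence (G.blockStep s.1 s.2 e)
    constructor
    · intro x
      rw [hB'iff]
      by_cases hx : M' x a
      · exact Or.inl ⟨hx, hx⟩
      · exact Or.inr ⟨h.b1.refl x, hx, hx⟩
    · intro x y hxy
      rw [hB'iff] at hxy ⊢
      rcases hxy with ⟨h1, h2⟩ | ⟨h1, h2, h3⟩
      · exact Or.inl ⟨h2, h1⟩
      · exact Or.inr ⟨h.b1.symm h1, h3, h2⟩
    · intro x y z hxy hyz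
      rw [hB'iff] at hxy hyz ⊢
      rcases hxy with ⟨h1, h2⟩ | ⟨h1, h2, h3⟩
      · rcases hyz with ⟨h1', h2'⟩ | ⟨h1', h2', h3'⟩
        · exact Or.inl ⟨h1, h2'⟩
        · exact absurd h2 h2'
      · rcases hyz with ⟨h1', h2'⟩ | ⟨h1', h2', h3'⟩
        · exact absurd h1' h3
        · exact Or.inr ⟨h.b1.trans h1 h1', h2, h3'⟩
  · intro v w
    refine Relation.ReflTransGen.mono ?_ _ _ (h.conn v w)
    rintro x y (hxy | hxy)
    · exact Or.inl (mergeStep_mono G e hxy)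
    · exact Or.inr hxy
  · intro hm
    have h2 : 1 < nclasses M' := by rw [hcount]; omega
    obtain ⟨x, hx, y, hy, hxy⟩ :=
      Finset.one_lt_card.mp (show 1 < (Finset.univ.image (cls M')).card from h2)
    have hex : ∃ w : V, ¬ M' a w := by
      by_cases hxa : x = cls M' a
      · obtain ⟨w, _, hw⟩ := Finset.mem_image.mp hy
        refine ⟨w, fun hc => hxy ?_⟩
        rw [hxa, ← hw]
        exact (cls_eq_iff hM'equiv).mpr hc
      · obtain ⟨w, _, hw⟩ := Finset.mem_image.mp hx
        refine ⟨w, fun hc => hxa ?_⟩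
        rw [← hw]
        exact (cls_eq_iff hM'equiv).mpr (hM'equiv.symm hc)
    obtain ⟨w, hw⟩ := hex
    refine ⟨a, w, ?_⟩
    show ¬ G.blockStep s.1 s.2 e a w
    rw [hB'iff]
    rintro (⟨h1, h2⟩ | ⟨h1, h2, h3⟩)
    · exact hw (hM'equiv.symm h2)
    · exact h2 (hM'equiv.refl a)

lemma exists_transBlock {s : (V → V → Prop) × (V → V → Prop)} {m : ℕ}
    (h : Inv G s m) (hm : 1 ≤ m) : ∃ e : E, G.TransBlock s.2 e := by
  obtain ⟨v, w, hvw⟩ := h.nt hm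
  have key : ∀ v w : V,
      Relation.ReflTransGen (fun a b => s.1 a b ∨ ∃ e : E, G.ends e = s(a, b)) v w →
      ¬ s.2 v w → ∃ e : E, G.TransBlock s.2 e := by
    intro v w hr
    induction hr using Relation.ReflTransGen.head_induction_on with
    | refl => exact fun hc => absurd (h.b1.refl _) hc
    | @head v c hstep htail ih =>
      intro hvw
      by_cases hc : s.2 c w
      · have hvc : ¬ s.2 v c := fun h' => hvw (h.b1.trans h' hc)
        rcases hstep with h1 | ⟨e, he⟩
        · exact absurd (h.sub _ _ h1) hvc
        · refine ⟨e, ?_⟩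
          intro a' b' he'
          have hs : s(v, c) = s(a', b') := he.symm.trans he'
          rw [Sym2.eq_iff] at hs
          rcases hs with ⟨rfl, rfl⟩ | ⟨rfl, rfl⟩
          · exact hvc
          · exact fun h' => hvc (h.b1.symm h')
      · exact ih hc
  exact key v w (h.conn v w) hvw

end PWaux
namespace PWaux
set_option linter.unusedSectionVars false
variable {V E : Type} [Fintype V] [Fintype E] (G : Multigraph V E)

noncomputable def K (s : (V → V → Prop) × (V → V → Prop)) : ℕ :=
  (Finset.univ.filter (G.TransBlock s.2)).card

def TBS (s : (V → V → Prop) × (V → V → Prop)) (L : List E) : Prop :=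
  ∀ p (h : p < L.length), G.TransBlock ((st G s (L.take p)).2) (L.get ⟨p, h⟩)

noncomputable def W (s : (V → V → Prop) × (V → V → Prop)) (L : List E) : ℚ :=
  if TBS G s L then ∏ p ∈ Finset.range L.length, ((K G (st G s (L.take p)) : ℚ))⁻¹ else 0

lemma TBS_nil (s) : TBS G s ([] : List E) := by
  intro p h; simp at h

lemma TBS_cons {s} {e : E} {L : List E} :
    TBS G s (e :: L) ↔ G.TransBlock s.2 e ∧ TBS G (G.stepPair s e) L := by
  constructor
  · intro h
    refine ⟨h 0 (Nat.succ_pos _), fun p hp => ?_⟩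
    exact h (p + 1) (by simpa using hp)
  · rintro ⟨h1, h2⟩ p hp
    cases p with
    | zero => exact h1
    | succ p => exact h2 p (by simpa using hp)

lemma W_nil (s) : W G s ([] : List E) = 1 := by
  rw [W, if_pos (TBS_nil G s)]
  simp

lemma W_cons (s) (e : E) (L : List E) :
    W G s (e :: L) =
      if G.TransBlock s.2 e then (K G s : ℚ)⁻¹ * W G (G.stepPair s e) L else 0 := by
  by_cases h1 : G.TransBlock s.2 e
  · rw [if_pos h1]
    by_cases h2 : TBS G (G.stepPair s e) L
    · rw [W, if_pos ((TBS_cons G).mpr ⟨h1, h2⟩), W, if_pos h2]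
      rw [List.length_cons, Finset.prod_range_succ']
      rw [mul_comm]
      rfl
    · rw [W, if_neg (fun hc => h2 (((TBS_cons G).mp hc).2)), W, if_neg h2, mul_zero]
  · rw [if_neg h1, W, if_neg (fun hc => h1 (((TBS_cons G).mp hc).1))]

lemma K_pos {s m} (h : Inv G s m) (hm : 1 ≤ m) : 0 < K G s := by
  obtain ⟨e, he⟩ := exists_transBlock G h hm
  exact Finset.card_pos.mpr ⟨e, Finset.mem_filter.mpr ⟨Finset.mem_univ e, he⟩⟩

lemma sum_W : ∀ (m : ℕ) (s : (V → V → Prop) × (V → V → Prop)), Inv G s m →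
    (∑ f : Fin m → E, W G s (List.ofFn f)) = 1 := by
  intro m
  induction m with
  | zero =>
    intro s _
    have : ∀ f : Fin 0 → E, W G s (List.ofFn f) = 1 := by
      intro f
      rw [List.ofFn_zero, W_nil]
    simp only [this]
    rw [Finset.sum_const, Finset.card_univ]
    have : Fintype.card (Fin 0 → E) = 1 := by simp
    rw [this]; simp
  | succ m ih =>
    intro s hs
    have hK : 0 < K G s := K_pos G hs (Nat.le_add_left 1 m)
    have step1 : (∑ f : Fin (m + 1) → E, W G s (List.ofFn f)) =
        ∑ p : E × (Fin m → E), W G s (List.ofFn (Fin.cons p.1 p.2 : Fin (m + 1) → E)) := by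
      exact (Equiv.sum_comp (Fin.consEquiv fun _ => E)
        (fun f => W G s (List.ofFn f))).symm
    rw [step1, Fintype.sum_prod_type]
    have step2 : ∀ (e : E) (g : Fin m → E),
        W G s (List.ofFn (Fin.cons e g : Fin (m + 1) → E)) = W G s (e :: List.ofFn g) := by
      intro e g
      congr 1
      rw [List.ofFn_succ]
      simp
    have step3 : ∀ e : E,
        (∑ g : Fin m → E, W G s (List.ofFn (Fin.cons e g : Fin (m + 1) → E))) =
          if G.TransBlock s.2 e then (K G s : ℚ)⁻¹ else 0 := by
      intro e
      by_cases he : G.TransBlock s.2 e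
      · rw [if_pos he]
        have hinv : Inv G (G.stepPair s e) m := inv_step G hs he
        calc (∑ g : Fin m → E, W G s (List.ofFn (Fin.cons e g : Fin (m + 1) → E)))
            = ∑ g : Fin m → E, (K G s : ℚ)⁻¹ * W G (G.stepPair s e) (List.ofFn g) := by
              apply Finset.sum_congr rfl
              intro g _
              rw [step2, W_cons, if_pos he]
          _ = (K G s : ℚ)⁻¹ * ∑ g : Fin m → E, W G (G.stepPair s e) (List.ofFn g) := by
              rw [Finset.mul_sum]
          _ = (K G s : ℚ)⁻¹ := by rw [ih _ hinv, mul_one]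
      · rw [if_neg he]
        apply Finset.sum_eq_zero
        intro g _
        rw [step2, W_cons, if_neg he]
    calc (∑ e : E, ∑ g : Fin m → E,
            W G s (List.ofFn (Fin.cons e g : Fin (m + 1) → E)))
        = ∑ e : E, if G.TransBlock s.2 e then (K G s : ℚ)⁻¹ else 0 := by
          exact Finset.sum_congr rfl fun e _ => step3 e
      _ = ∑ e ∈ Finset.univ.filter (G.TransBlock s.2), (K G s : ℚ)⁻¹ := by
          rw [Finset.sum_filter]
      _ = (K G s : ℚ) * (K G s : ℚ)⁻¹ := by
          rw [Finset.sum_const, K, nsmul_eq_mul]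
      _ = 1 := mul_inv_cancel₀ (by exact_mod_cast hK.ne')

lemma inv_iterate : ∀ (L : List E) (s) (m : ℕ), Inv G s (L.length + m) → TBS G s L →
    Inv G (st G s L) m := by
  intro L
  induction L with
  | nil =>
    intro s m h _
    simpa [st_nil] using h
  | cons e L ih =>
    intro s m h hT
    obtain ⟨h1, h2⟩ := (TBS_cons G).mp hT
    have : Inv G s (L.length + m + 1) := by
      have hl : (e :: L).length + m = L.length + m + 1 := by
        simp only [List.length_cons]; omega
      rwa [hl] at h
    exact ih (G.stepPair s e) m (inv_step G this h1) h2

lemma TBS_take {s} {L : List E} (h : TBS G s L) (j : ℕ) : TBS G s (L.take j) := by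
  intro p hp
  have hlen : p < L.length := lt_of_lt_of_le hp (by simp [List.length_take])
  have hpj : p < j := lt_of_lt_of_le hp (by simp [List.length_take])
  have h1 : (L.take j).take p = L.take p := by
    rw [List.take_take]
    congr 1
    omega
  have h2 : (L.take j).get ⟨p, hp⟩ = L.get ⟨p, hlen⟩ := by simp
  rw [h1, h2]
  exact h p hlen

lemma st_M_mono : ∀ (L : List E) (s) {x y : V}, s.1 x y → (st G s L).1 x y := by
  intro L
  induction L with
  | nil => exact fun s x y h => h
  | cons e L ih =>
    intro s x y h
    exact ih (G.stepPair s e) (mergeStep_mono G e h)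

lemma connects_mono {S S' : Finset E} (h : S ⊆ S') {x y : V} (hc : G.Connects S x y) :
    G.Connects S' x y := by
  refine Relation.ReflTransGen.mono ?_ _ _ hc
  rintro a b ⟨e, he, hab⟩
  exact ⟨e, h he, hab⟩

lemma connects_equivalence (S : Finset E) : Equivalence (G.Connects S ·  ·) := by
  constructor
  · exact fun x => Relation.ReflTransGen.refl
  · intro x y h
    refine @Std.Symm.symm _ _ (@Relation.ReflTransGen.stdSymm _ _ ⟨?_⟩) _ _ h
    rintro a b ⟨e, he, hab⟩
    exact ⟨e, he, hab.trans (Sym2.eq_swap)⟩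
  · exact fun h1 h2 => Relation.ReflTransGen.trans h1 h2

lemma st_conn : ∀ (L : List E) (s) (T₀ : Finset E),
    (∀ x y : V, s.1 x y → G.Connects T₀ x y) →
    ∀ x y : V, (st G s L).1 x y → G.Connects (T₀ ∪ L.toFinset) x y := by
  intro L
  induction L with
  | nil =>
    intro s T₀ h x y hxy
    simpa using h x y hxy
  | cons e L ih =>
    intro s T₀ h x y hxy
    have hbase : ∀ x y : V, (G.stepPair s e).1 x y → G.Connects (insert e T₀) x y := by
      intro x y hxy
      refine eqvGen_le (connects_equivalence G (insert e T₀)) ?_ x y hxy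
      rintro a b (hab | hab)
      · exact connects_mono G (Finset.subset_insert e T₀) (h a b hab)
      · exact Relation.ReflTransGen.single ⟨e, Finset.mem_insert_self e T₀, hab⟩
    have := ih (G.stepPair s e) (insert e T₀) hbase x y hxy
    have heq : insert e T₀ ∪ L.toFinset = T₀ ∪ (e :: L).toFinset := by
      rw [List.toFinset_cons, Finset.insert_union, Finset.union_insert]
    rwa [heq] at this

lemma inv_zero_total {s} (h : Inv G s 0) : ∀ x y : V, s.1 x y := by
  intro x y
  have h1 : nclasses s.1 = 1 := h.count
  obtain ⟨z, hz⟩ := Finset.card_eq_one.mp h1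
  have hx : cls s.1 x ∈ Finset.univ.image (cls s.1) :=
    Finset.mem_image.mpr ⟨x, Finset.mem_univ x, rfl⟩
  have hy : cls s.1 y ∈ Finset.univ.image (cls s.1) :=
    Finset.mem_image.mpr ⟨y, Finset.mem_univ y, rfl⟩
  rw [hz, Finset.mem_singleton] at hx hy
  exact (cls_eq_iff h.m1).mp (hx.trans hy.symm)

lemma inv_init [Nonempty V] (hG : G.IsConnected) {B0 : V → V → Prop}
    (hB0 : Equivalence B0) (hnt : ∃ v w : V, ¬ B0 v w) :
    Inv G ((Eq, B0) : (V → V → Prop) × (V → V → Prop)) (Fintype.card V - 1) := by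
  refine ⟨eq_equivalence, hB0, ?_, ?_, ?_, fun _ => hnt⟩
  · intro x y h
    exact h ▸ hB0.refl x
  · intro v w
    refine Relation.ReflTransGen.mono ?_ _ _ (hG v w)
    rintro a b ⟨e, _, hab⟩
    exact Or.inr ⟨e, hab⟩
  · have hcls : ∀ v : V, cls (Eq : V → V → Prop) v = {v} := by
      intro v
      ext u
      simp [cls, eq_comm]
    have : Finset.univ.image (cls (Eq : V → V → Prop)) =
        Finset.univ.image (fun v : V => ({v} : Finset V)) := by
      apply Finset.image_congr
      intro v _
      exact hcls v
    rw [nclasses, this, Finset.card_image_of_injective _ (fun a b h => by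
      simpa using Finset.singleton_injective h), Finset.card_univ]
    have : 0 < Fintype.card V := Fintype.card_pos
    omega

end PWaux
namespace PWaux
set_option linter.unusedSectionVars false
variable {V E : Type} [Fintype V] [Fintype E] (G : Multigraph V E)

lemma take_succ_get {L : List E} {i : ℕ} (hi : i < L.length) :
    L.take (i + 1) = L.take i ++ [L.get ⟨i, hi⟩] := by
  rw [List.take_succ]
  congr
  rw [List.getElem?_eq_getElem hi]
  rfl

lemma tbs_nodup {s : (V → V → Prop) × (V → V → Prop)} {m : ℕ} (hs : Inv G s m)
    {L : List E} (hT : TBS G s L) (hlen : L.length ≤ m) : L.Nodup := by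
  rw [List.nodup_iff_injective_get]
  have key : ∀ i j (hi : i < L.length) (hj : j < L.length), i < j →
      L.get ⟨i, hi⟩ ≠ L.get ⟨j, hj⟩ := by
    intro i j hi hj hij heq
    set e := L.get ⟨i, hi⟩ with he
    obtain ⟨⟨a, b⟩, hab0⟩ := Quot.exists_rep (G.ends e)
    have hends : G.ends e = s(a, b) := hab0.symm
    -- merged after step i
    have hstep : (st G s (L.take (i + 1))).1 a b := by
      rw [take_succ_get hi, st_append]
      exact mergeStep_ends G hends
    -- monotone up to j
    have hmid : (st G s (L.take j)).1 a b := by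
      have hdecomp : L.take j = L.take (i + 1) ++ (L.take j).drop (i + 1) := by
        conv_lhs => rw [← List.take_append_drop (i + 1) (L.take j)]
        congr 1
        rw [List.take_take]
        congr 1
        omega
      rw [hdecomp, st_append]
      exact st_M_mono G _ _ hstep
    -- invariant at stage j
    have hinvj : Inv G (st G s (L.take j)) (m - j) := by
      apply inv_iterate G (L.take j) s (m - j) _ (TBS_take G hT j)
      have : (L.take j).length + (m - j) = m := by
        rw [List.length_take]
        omega
      rwa [this]
    have hBab : (st G s (L.take j)).2 a b := hinvj.sub _ _ hmid
    have hTB := hT j hj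
    rw [← heq] at hTB
    exact hTB a b hends hBab
  intro x y hxy
  rcases lt_trichotomy (x : ℕ) (y : ℕ) with h | h | h
  · exact absurd hxy (by
      have := key x y x.2 y.2 h
      convert this using 2 <;> simp)
  · exact Fin.ext h
  · exact absurd hxy.symm (by
      have := key y x y.2 x.2 h
      convert this using 2 <;> simp)

lemma tbs_spanning {B0 : V → V → Prop} {m : ℕ}
    (hInv : Inv G ((Eq, B0) : (V → V → Prop) × (V → V → Prop)) m)
    {L : List E} (hT : TBS G (Eq, B0) L) (hlen : L.length = m) :
    ∀ v w : V, G.Connects L.toFinset v w := by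
  intro v w
  have hfin : Inv G (st G (Eq, B0) L) 0 := by
    apply inv_iterate G L (Eq, B0) 0 _ hT
    rw [hlen] at *
    simpa using hInv
  have htot : (st G (Eq, B0) L).1 v w := inv_zero_total G hfin v w
  have := st_conn G L (Eq, B0) ∅ (fun x y h => h ▸ Relation.ReflTransGen.refl) v w htot
  rwa [Finset.empty_union] at this

lemma wOrd_eq {B0 : V → V → Prop} {L : List E} (hlen : L.length = Fintype.card V - 1) :
    G.wOrd B0 L = W G (Eq, B0) L := by
  rw [Multigraph.wOrd, W, ← hlen]
  rfl

/-- reindexing the sum over orderings of `T` as a sum over injective tuples -/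
lemma sum_orderings {T : Finset E} {m : ℕ} (hT : T.card = m) (Φ : List E → ℚ) :
    (∑ τ : Fin T.card ≃ {e // e ∈ T}, Φ (List.ofFn fun i => ((τ i : E)))) =
      ∑ f ∈ (Finset.univ : Finset (Fin m → E)).filter
          (fun f => Function.Injective f ∧ ∀ i, f i ∈ T),
        Φ (List.ofFn f) := by
  have hcard : Fintype.card (Fin m) = Fintype.card {e // e ∈ T} := by
    rw [Fintype.card_coe, Fintype.card_fin, hT]
  refine Finset.sum_nbij'
    (i := fun τ => (fun i : Fin m => ((τ (Fin.cast hT.symm i) : E))))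
    (j := fun f =>
      if h : Function.Injective f ∧ ∀ i, f i ∈ T then
        (finCongr hT).trans (Equiv.ofBijective (fun i : Fin m => (⟨f i, h.2 i⟩ : {e // e ∈ T}))
          ((Fintype.bijective_iff_injective_and_card _).mpr
            ⟨fun x y hxy => h.1 (congrArg Subtype.val hxy), hcard⟩))
      else (Fintype.equivFinOfCardEq (Fintype.card_coe T)).symm)
    ?_ ?_ ?_ ?_ ?_
  · intro τ _
    rw [Finset.mem_filter]
    refine ⟨Finset.mem_univ _, ?_, fun i => (τ (Fin.cast hT.symm i)).2⟩
    intro x y hxy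
    have h2 := τ.injective (Subtype.ext hxy)
    have h3 := congrArg Fin.val h2
    exact Fin.ext h3
  · intro f _
    exact Finset.mem_univ _
  · intro τ _
    have hcond : Function.Injective (fun i : Fin m => ((τ (Fin.cast hT.symm i) : E))) ∧
        ∀ i, ((τ (Fin.cast hT.symm i) : E)) ∈ T := by
      refine ⟨?_, fun i => (τ (Fin.cast hT.symm i)).2⟩
      intro x y hxy
      have h2 := τ.injective (Subtype.ext hxy)
      have h3 := congrArg Fin.val h2
      exact Fin.ext h3
    dsimp only
    rw [dif_pos hcond]
    ext x
    simp only [Equiv.trans_apply, Equiv.ofBijective_apply, finCongr_apply]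
    have hxx : Fin.cast hT.symm (Fin.cast hT x) = x := Fin.ext rfl
    rw [hxx]
  · intro f hf
    rw [Finset.mem_filter] at hf
    rw [dif_pos hf.2]
    funext i
    simp only [Equiv.trans_apply, Equiv.ofBijective_apply, finCongr_apply]
    have hxx : Fin.cast hT (Fin.cast hT.symm i) = i := Fin.ext rfl
    rw [hxx]
  · intro τ _
    congr 1
    exact List.ofFn_congr hT _
end PWaux


/-- for a finite connected multigraph `G` and a non-trivial
partition `B0` of its vertex set, the partition weights
`w^Π(G,T) = ∑_{τ admissible} ∏_p 1/k_p(T_τ)` sum to `1` over all spanning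
trees `T` of `G`. -/
theorem sum_partition_weights_eq_one
    {V E : Type} [Fintype V] [Fintype E] [Nonempty V]
    (G : Multigraph V E) (hG : G.IsConnected)
    (B0 : V → V → Prop) (hB0 : Equivalence B0)
    (hnt : ∃ v w : V, ¬ B0 v w) :
    ∑ T ∈ Finset.univ.filter (fun T : Finset E => G.IsSpanningTree T),
        G.wPi B0 T = 1 := by
  classical
  have hInv := PWaux.inv_init G hG hB0 hnt
  set n1 := Fintype.card V - 1 with hn1
  have hstep1 : ∀ T ∈ Finset.univ.filter (fun T : Finset E => G.IsSpanningTree T),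
      G.wPi B0 T = ∑ f ∈ (Finset.univ : Finset (Fin n1 → E)).filter
          (fun f => Function.Injective f ∧ ∀ i, f i ∈ T),
        PWaux.W G (Eq, B0) (List.ofFn f) := by
    intro T hT
    rw [Finset.mem_filter] at hT
    have hc : T.card = n1 := hT.2.2
    rw [Multigraph.wPi, PWaux.sum_orderings hc (G.wOrd B0)]
    apply Finset.sum_congr rfl
    intro f _
    exact PWaux.wOrd_eq G (by rw [List.length_ofFn, hn1])
  rw [Finset.sum_congr rfl hstep1]
  have hstep2 : ∀ T ∈ Finset.univ.filter (fun T : Finset E => G.IsSpanningTree T),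
      (∑ f ∈ (Finset.univ : Finset (Fin n1 → E)).filter
          (fun f => Function.Injective f ∧ ∀ i, f i ∈ T),
        PWaux.W G (Eq, B0) (List.ofFn f)) =
      ∑ f : Fin n1 → E, if Function.Injective f ∧ ∀ i, f i ∈ T then
          PWaux.W G (Eq, B0) (List.ofFn f) else 0 := by
    intro T _
    rw [Finset.sum_filter]
  rw [Finset.sum_congr rfl hstep2, Finset.sum_comm]
  have hstep3 : ∀ f : Fin n1 → E,
      (∑ T ∈ Finset.univ.filter (fun T : Finset E => G.IsSpanningTree T),
        if Function.Injective f ∧ ∀ i, f i ∈ T then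
          PWaux.W G (Eq, B0) (List.ofFn f) else 0) =
      PWaux.W G (Eq, B0) (List.ofFn f) := by
    intro f
    set L := List.ofFn f with hL
    by_cases hW : PWaux.W G (Eq, B0) L = 0
    · rw [hW]
      simp
    · have hTBS : PWaux.TBS G (Eq, B0) L := by
        by_contra hc
        exact hW (by rw [PWaux.W, if_neg hc])
      have hlen : L.length = n1 := by rw [hL, List.length_ofFn]
      have hnd : L.Nodup := PWaux.tbs_nodup G hInv hTBS (le_of_eq hlen)
      have hinjf : Function.Injective f := List.nodup_ofFn.mp (hL ▸ hnd)
      have hspan : G.IsSpanningTree L.toFinset :=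
        ⟨PWaux.tbs_spanning G hInv hTBS hlen,
         by rw [List.toFinset_card_of_nodup hnd, hlen]⟩
      rw [Finset.sum_eq_single L.toFinset]
      · rw [if_pos]
        refine ⟨hinjf, fun i => ?_⟩
        rw [hL, List.mem_toFinset, List.mem_ofFn]
        exact ⟨i, rfl⟩
      · intro b hb hne
        rw [Finset.mem_filter] at hb
        rw [if_neg]
        rintro ⟨hinj, hmem⟩
        apply hne
        have hsub : L.toFinset ⊆ b := by
          intro e he
          rw [hL, List.mem_toFinset, List.mem_ofFn] at he
          obtain ⟨i, rfl⟩ := he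
          exact hmem i
        have hcb : b.card = n1 := hb.2.2
        have hcL : L.toFinset.card = n1 := by
          rw [List.toFinset_card_of_nodup hnd, hlen]
        exact (Finset.eq_of_subset_of_card_le hsub (by rw [hcb, hcL])).symm
      · intro hnot
        exact absurd (Finset.mem_filter.mpr ⟨Finset.mem_univ _, hspan⟩) hnot
  rw [Finset.sum_congr rfl (fun f _ => hstep3 f)]
  exact PWaux.sum_W G n1 (Eq, B0) hInv
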